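/- The reduction ⇒ = ⇒_{β_v} ∪ ⇒⊕ of the call-by-value probabilistic λ-calculus Λ⊕^cbv is confluent. -/

import Mathlib

open scoped NNReal ENNReal

/-- A (raw) multidistribution on `X`: a finite multiset of weighted elements. -/
abbrev MDist (X : Type) := Multiset (ℝ≥0 × X)

namespace MDist

/-- Scalar multiplication of a multidistribution. -/
def scale {X : Type} (p : ℝ≥0) (m : MDist X) : MDist X :=
  m.map fun q => (p * q.1, q.2)

/-- The singleton multidistribution `[1 M]`. -/
def single {X : Type} (M : X) : MDist X := {(1, M)}

/-- A multidistribution is proper when every weight lies in `(0,1]` and the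
weights sum to at most `1`. -/
def Proper {X : Type} (m : MDist X) : Prop :=
  (∀ q ∈ m, 0 < q.1 ∧ q.1 ≤ 1) ∧ (m.map Prod.fst).sum ≤ 1

/-- The probability that the distribution associated to a multidistribution
assigns to an event `A`. -/
noncomputable def mass {X : Type} (m : MDist X) (A : Set X) : ℝ≥0∞ :=
  (m.map fun q => A.indicator (fun _ => (q.1 : ℝ≥0∞)) q.2).sum

end MDist

/-- One component of the lifting: either keep the term or perform a step. -/
def LiftTerm {X : Type} (r : X → MDist X → Prop) (M : X) (m : MDist X) : Prop :=
  m = MDist.single M ∨ r M m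

/-- The lifting of a relation `r ⊆ X × MDist X` to a binary relation on
multidistributions. -/
inductive Lift {X : Type} (r : X → MDist X → Prop) : MDist X → MDist X → Prop
  | nil : Lift r 0 0
  | cons {p : ℝ≥0} {M : X} {m s t : MDist X} :
      LiftTerm r M m → Lift r s t → Lift r ((p, M) ::ₘ s) (MDist.scale p m + t)
/-- Terms of `Λ⊕` (de Bruijn representation). -/
inductive Term : Type
  | var : ℕ → Term
  | lam : Term → Term
  | app : Term → Term → Term
  | choice : Term → Term → Term
deriving DecidableEq

namespace Term

/-- Shifting of de Bruijn indices above a cutoff. -/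
def liftAux (c : ℕ) : Term → Term
  | var k => if k < c then var k else var (k + 1)
  | lam M => lam (liftAux (c + 1) M)
  | app M N => app (liftAux c M) (liftAux c N)
  | choice M N => choice (liftAux c M) (liftAux c N)

/-- Capture-avoiding substitution `M[N/j]`. -/
def subst : Term → ℕ → Term → Term
  | var k, j, N => if k = j then N else if j < k then var (k - 1) else var k
  | lam M, j, N => lam (subst M (j + 1) (liftAux 0 N))
  | app M P, j, N => app (subst M j N) (subst P j N)
  | choice M P, j, N => choice (subst M j N) (subst P j N)

/-- Values: variables and abstractions. -/
inductive IsValue : Term → Prop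
  | var (n : ℕ) : IsValue (var n)
  | lam (M : Term) : IsValue (lam M)

/-- `β_v`-reduction, closed under arbitrary contexts. -/
inductive BetaStep : Term → Term → Prop
  | beta {M V : Term} : IsValue V → BetaStep (app (lam M) V) (subst M 0 V)
  | appL {M M' N : Term} : BetaStep M M' → BetaStep (app M N) (app M' N)
  | appR {M N N' : Term} : BetaStep N N' → BetaStep (app M N) (app M N')
  | lam {M M' : Term} : BetaStep M M' → BetaStep (lam M) (lam M')
  | chL {M M' N : Term} : BetaStep M M' → BetaStep (choice M N) (choice M' N)
  | chR {M N N' : Term} : BetaStep N N' → BetaStep (choice M N) (choice M N')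

/-- Surface `β_v`-reduction: closure under surface contexts `S ::= □ | MS | SM`. -/
inductive SurfBetaStep : Term → Term → Prop
  | beta {M V : Term} : IsValue V → SurfBetaStep (app (lam M) V) (subst M 0 V)
  | appL {M M' N : Term} : SurfBetaStep M M' → SurfBetaStep (app M N) (app M' N)
  | appR {M N N' : Term} : SurfBetaStep N N' → SurfBetaStep (app M N) (app M N')

/-- `PlusStep M A B` holds when `M = S(P ⊕ Q)`, `A = S(P)`, `B = S(Q)` for a
surface context `S ::= □ | MS | SM`. -/
inductive PlusStep : Term → Term → Term → Prop
  | choice {M N : Term} : PlusStep (choice M N) M N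
  | appL {M A B N : Term} : PlusStep M A B → PlusStep (app M N) (app A N) (app B N)
  | appR {M N A B : Term} : PlusStep N A B → PlusStep (app M N) (app M A) (app M B)

end Term

open Term

/-- The reduction `→_{β_v} ⊆ Λ⊕ × MDST(Λ⊕)`. -/
def betaRed (M : Term) (m : MDist Term) : Prop :=
  ∃ N, BetaStep M N ∧ m = MDist.single N

/-- The probabilistic reduction `→_⊕ ⊆ Λ⊕ × MDST(Λ⊕)`. -/
def plusRed (M : Term) (m : MDist Term) : Prop :=
  ∃ A B, PlusStep M A B ∧ m = {((1 : ℝ≥0) / 2, A), ((1 : ℝ≥0) / 2, B)}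

/-- The full reduction `→ = →_{β_v} ∪ →_⊕`. -/
def red (M : Term) (m : MDist Term) : Prop := betaRed M m ∨ plusRed M m

/-- Surface reduction `→ₛ`: β_v and ⊕ rules closed under surface contexts. -/
def surfRed (M : Term) (m : MDist Term) : Prop :=
  (∃ N, SurfBetaStep M N ∧ m = MDist.single N) ∨ plusRed M m

/-- A step is deep when it is not a surface step. -/
def deepRed (M : Term) (m : MDist Term) : Prop := red M m ∧ ¬ surfRed M m

namespace Term

theorem lift_lift (M : Term) : ∀ c c', c ≤ c' →
    liftAux c (liftAux c' M) = liftAux (c' + 1) (liftAux c M) := by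
  induction M with
  | var k =>
    intro c c' h
    simp only [liftAux]
    split_ifs <;> simp_all [liftAux] <;> first | rfl | omega | (split_ifs <;> first | rfl | omega)
  | lam M ih => intro c c' h; simp only [liftAux]; rw [ih (c+1) (c'+1) (by omega)]
  | app M N ihM ihN => intro c c' h; simp only [liftAux]; rw [ihM _ _ h, ihN _ _ h]
  | choice M N ihM ihN => intro c c' h; simp only [liftAux]; rw [ihM _ _ h, ihN _ _ h]

theorem lift_subst_low (M : Term) : ∀ c j N, j ≤ c →
    liftAux c (subst M j N) = subst (liftAux (c + 1) M) j (liftAux c N) := by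
  induction M with
  | var k =>
    intro c j N h
    simp only [subst, liftAux]
    split_ifs <;> simp_all [liftAux, subst] <;>
      first
        | rfl | omega | (exact congrArg var (by omega))
        | (split_ifs <;> first | rfl | omega | (exact congrArg var (by omega)))
  | lam M ih =>
    intro c j N h
    simp only [subst, liftAux]
    rw [ih (c+1) (j+1) _ (by omega), lift_lift N 0 c (by omega)]
  | app M P ihM ihP => intro c j N h; simp only [subst, liftAux]; rw [ihM _ _ _ h, ihP _ _ _ h]
  | choice M P ihM ihP => intro c j N h; simp only [subst, liftAux]; rw [ihM _ _ _ h, ihP _ _ _ h]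

theorem lift_subst_high (M : Term) : ∀ c j N, c ≤ j →
    liftAux c (subst M j N) = subst (liftAux c M) (j + 1) (liftAux c N) := by
  induction M with
  | var k =>
    intro c j N h
    simp only [subst, liftAux]
    split_ifs <;> simp_all [liftAux, subst] <;>
      first
        | rfl | omega | (exact congrArg var (by omega))
        | (split_ifs <;> first | rfl | omega | (exact congrArg var (by omega)))
  | lam M ih =>
    intro c j N h
    simp only [subst, liftAux]
    rw [ih (c+1) (j+1) _ (by omega), lift_lift N 0 c (by omega)]
  | app M P ihM ihP => intro c j N h; simp only [subst, liftAux]; rw [ihM _ _ _ h, ihP _ _ _ h]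
  | choice M P ihM ihP => intro c j N h; simp only [subst, liftAux]; rw [ihM _ _ _ h, ihP _ _ _ h]

theorem subst_lift (N : Term) : ∀ i P, subst (liftAux i N) i P = N := by
  induction N with
  | var k =>
    intro i P
    simp only [liftAux]
    split_ifs <;> simp_all [subst] <;>
      first
        | rfl | omega | (exact congrArg var (by omega))
        | (split_ifs <;> first | rfl | omega | (exact congrArg var (by omega)))
  | lam M ih => intro i P; simp only [liftAux, subst]; rw [ih]
  | app M P ihM ihP => intro i P'; simp only [liftAux, subst]; rw [ihM, ihP]
  | choice M P ihM ihP => intro i P'; simp only [liftAux, subst]; rw [ihM, ihP]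

theorem subst_subst (M : Term) : ∀ i j V N, i ≤ j →
    subst (subst M i V) j N = subst (subst M (j + 1) (liftAux i N)) i (subst V j N) := by
  induction M with
  | var k =>
    intro i j V N h
    simp only [subst]
    by_cases h1 : k = i
    · subst h1
      simp only [if_pos rfl, if_neg (by omega : ¬ k = j + 1)]
      rw [if_neg (by omega : ¬ j + 1 < k)]
      simp [subst]
    · by_cases h2 : k = j + 1
      · subst h2
        rw [if_neg h1, if_pos rfl]
        rw [if_pos (by omega : i < j + 1)]
        simp only [subst]
        rw [if_pos (by omega : j + 1 - 1 = j)]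
        rw [subst_lift]
      · rw [if_neg h1, if_neg h2]
        split_ifs <;> simp_all [subst] <;> split_ifs <;>
          first | rfl | omega | (exact congrArg var (by omega))
  | lam M ih =>
    intro i j V N h
    simp only [subst]
    rw [ih (i+1) (j+1) _ _ (by omega), lift_lift N 0 i (by omega),
      lift_subst_high V 0 j _ (by omega)]
  | app M P ihM ihP => intro i j V N h; simp only [subst]; rw [ihM _ _ _ _ h, ihP _ _ _ _ h]
  | choice M P ihM ihP => intro i j V N h; simp only [subst]; rw [ihM _ _ _ _ h, ihP _ _ _ _ h]

end Term

namespace Term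

/-- Parallel `β_v`-reduction (Tait–Martin-Löf). -/
inductive Par : Term → Term → Prop
  | var (n : ℕ) : Par (var n) (var n)
  | lam {M M'} : Par M M' → Par (lam M) (lam M')
  | app {M M' N N'} : Par M M' → Par N N' → Par (app M N) (app M' N')
  | choice {M M' N N'} : Par M M' → Par N N' → Par (choice M N) (choice M' N')
  | beta {M M' V V'} : IsValue V → Par M M' → Par V V' →
      Par (app (lam M) V) (subst M' 0 V')

theorem Par.refl (M : Term) : Par M M := by
  induction M with
  | var n => exact Par.var n
  | lam M ih => exact Par.lam ih
  | app M N ihM ihN => exact Par.app ihM ihN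
  | choice M N ihM ihN => exact Par.choice ihM ihN

theorem Par.value {V V' : Term} (hV : IsValue V) (h : Par V V') : IsValue V' := by
  cases hV with
  | var n => cases h; exact IsValue.var _
  | lam M => cases h; exact IsValue.lam _

theorem IsValue.lift {V : Term} (hV : IsValue V) (c : ℕ) : IsValue (liftAux c V) := by
  cases hV with
  | var n => simp only [liftAux]; split_ifs <;> exact IsValue.var _
  | lam M => exact IsValue.lam _

theorem IsValue.subst {V N : Term} (hV : IsValue V) (j : ℕ) (hN : IsValue N) :
    IsValue (Term.subst V j N) := by
  cases hV with
  | var n => simp only [Term.subst]; split_ifs <;> first | exact hN | exact IsValue.var _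
  | lam M => exact IsValue.lam _

theorem Par.lift {M M' : Term} (h : Par M M') : ∀ c, Par (liftAux c M) (liftAux c M') := by
  induction h with
  | var n => intro c; exact Par.refl _
  | lam _ ih => intro c; exact Par.lam (ih (c+1))
  | app _ _ ihM ihN => intro c; exact Par.app (ihM c) (ihN c)
  | choice _ _ ihM ihN => intro c; exact Par.choice (ihM c) (ihN c)
  | @beta M M' V V' hV _ _ ihM ihV =>
    intro c
    have : liftAux c (subst M' 0 V') = subst (liftAux (c+1) M') 0 (liftAux c V') :=
      lift_subst_low M' c 0 V' (by omega)
    rw [show liftAux c (Term.app (Term.lam M) V) = Term.app (Term.lam (liftAux (c+1) M)) (liftAux c V) from rfl,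
      this]
    exact Par.beta (hV.lift c) (ihM (c+1)) (ihV c)

theorem Par.subst_par {M M' : Term} (h : Par M M') :
    ∀ j {N N'}, IsValue N → IsValue N' → Par N N' →
    Par (subst M j N) (subst M' j N') := by
  induction h with
  | var n =>
    intro j N N' hN hN' hNN
    simp only [Term.subst]
    split_ifs <;> first | exact hNN | exact Par.refl _
  | lam _ ih =>
    intro j N N' hN hN' hNN
    exact Par.lam (ih (j+1) (hN.lift 0) (hN'.lift 0) (hNN.lift 0))
  | app _ _ ihM ihN =>
    intro j N N' hN hN' hNN
    exact Par.app (ihM j hN hN' hNN) (ihN j hN hN' hNN)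
  | choice _ _ ihM ihN =>
    intro j N N' hN hN' hNN
    exact Par.choice (ihM j hN hN' hNN) (ihN j hN hN' hNN)
  | @beta M M' V V' hV hM hVp ihM ihV =>
    intro j N N' hN hN' hNN
    have e : Term.subst (Term.subst M' 0 V') j N'
        = Term.subst (Term.subst M' (j+1) (liftAux 0 N')) 0 (Term.subst V' j N') :=
      subst_subst M' 0 j V' N' (by omega)
    rw [show Term.subst (Term.app (Term.lam M) V) j N
        = Term.app (Term.lam (Term.subst M (j+1) (liftAux 0 N))) (Term.subst V j N) from rfl, e]
    exact Par.beta (hV.subst j hN)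
      (ihM (j+1) (hN.lift 0) (hN'.lift 0) (hNN.lift 0)) (ihV j hN hN' hNN)

theorem par_diamond : ∀ {M N₁ N₂ : Term}, Par M N₁ → Par M N₂ →
    ∃ N₃, Par N₁ N₃ ∧ Par N₂ N₃ := by
  intro M N₁ N₂ h1
  induction h1 generalizing N₂ with
  | var n => intro h2; cases h2; exact ⟨_, Par.var n, Par.var n⟩
  | @lam M M' hM ih =>
    intro h2
    cases h2 with
    | lam hM2 => obtain ⟨P, hP1, hP2⟩ := ih hM2; exact ⟨lam P, Par.lam hP1, Par.lam hP2⟩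
  | @app M M' N N' hM hN ihM ihN =>
    intro h2
    cases h2 with
    | app hM2 hN2 =>
      obtain ⟨P, hP1, hP2⟩ := ihM hM2
      obtain ⟨Q, hQ1, hQ2⟩ := ihN hN2
      exact ⟨app P Q, Par.app hP1 hQ1, Par.app hP2 hQ2⟩
    | @beta M₀ M₀' V V' hV hM2 hV2 =>
      cases hM with
      | @lam _ M₁ hM1 =>
        obtain ⟨P, hP1, hP2⟩ := ihM (Par.lam hM2)
        cases hP1 with
        | @lam _ P₀ hPin =>
          cases hP2 with
          | lam hPin2 =>
            obtain ⟨Q, hQ1, hQ2⟩ := ihN hV2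
            have hV' : IsValue V' := Par.value hV hV2
            exact ⟨subst P₀ 0 Q,
              Par.beta (Par.value hV hN) hPin hQ1,
              hPin2.subst_par 0 hV' (Par.value hV' hQ2) hQ2⟩
  | choice hM hN ihM ihN =>
    intro h2
    cases h2 with
    | choice hM2 hN2 =>
      obtain ⟨P, hP1, hP2⟩ := ihM hM2
      obtain ⟨Q, hQ1, hQ2⟩ := ihN hN2
      exact ⟨choice P Q, Par.choice hP1 hQ1, Par.choice hP2 hQ2⟩
  | @beta M M' V V' hV hM hVp ihM ihV =>
    intro h2
    cases h2 with
    | app hM2 hN2 =>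
      cases hM2 with
      | @lam _ M₂ hM2in =>
        obtain ⟨P, hP1, hP2⟩ := ihM hM2in
        obtain ⟨Q, hQ1, hQ2⟩ := ihV hN2
        have hV' : IsValue V' := Par.value hV hVp
        exact ⟨subst P 0 Q,
          hP1.subst_par 0 hV' (Par.value hV' hQ1) hQ1,
          Par.beta (Par.value hV hN2) hP2 hQ2⟩
    | @beta _ M₂ _ V₂ hV2 hM2 hV2p =>
      obtain ⟨P, hP1, hP2⟩ := ihM hM2
      obtain ⟨Q, hQ1, hQ2⟩ := ihV hV2p
      have hV' : IsValue V' := Par.value hV hVp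
      have hV₂ : IsValue V₂ := Par.value hV hV2p
      exact ⟨subst P 0 Q,
        hP1.subst_par 0 hV' (Par.value hV' hQ1) hQ1,
        hP2.subst_par 0 hV₂ (Par.value hV₂ hQ2) hQ2⟩

end Term

namespace Term

theorem BetaStep_par {M N : Term} (h : BetaStep M N) : Par M N := by
  induction h with
  | beta hV => exact Par.beta hV (Par.refl _) (Par.refl _)
  | appL _ ih => exact Par.app ih (Par.refl _)
  | appR _ ih => exact Par.app (Par.refl _) ih
  | lam _ ih => exact Par.lam ih
  | chL _ ih => exact Par.choice ih (Par.refl _)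
  | chR _ ih => exact Par.choice (Par.refl _) ih

open Relation

theorem rtg_app {M M' N N' : Term} (h1 : ReflTransGen BetaStep M M')
    (h2 : ReflTransGen BetaStep N N') :
    ReflTransGen BetaStep (app M N) (app M' N') :=
  ReflTransGen.trans
    (ReflTransGen.lift (fun x => app x N) (fun _ _ hab => BetaStep.appL hab) _ _ h1)
    (ReflTransGen.lift (fun x => app M' x) (fun _ _ hab => BetaStep.appR hab) _ _ h2)

theorem rtg_lam {M M' : Term} (h : ReflTransGen BetaStep M M') :
    ReflTransGen BetaStep (lam M) (lam M') :=
  ReflTransGen.lift Term.lam (fun a b hab => BetaStep.lam hab) _ _ h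

theorem rtg_choice {M M' N N' : Term} (h1 : ReflTransGen BetaStep M M')
    (h2 : ReflTransGen BetaStep N N') :
    ReflTransGen BetaStep (choice M N) (choice M' N') :=
  ReflTransGen.trans
    (ReflTransGen.lift (fun x => choice x N) (fun _ _ hab => BetaStep.chL hab) _ _ h1)
    (ReflTransGen.lift (fun x => choice M' x) (fun _ _ hab => BetaStep.chR hab) _ _ h2)

theorem par_rtg {M N : Term} (h : Par M N) : ReflTransGen BetaStep M N := by
  induction h with
  | var n => exact ReflTransGen.refl
  | lam _ ih => exact rtg_lam ih
  | app _ _ ihM ihN => exact rtg_app ihM ihN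
  | choice _ _ ihM ihN => exact rtg_choice ihM ihN
  | @beta M M' V V' hV hM hVp ihM ihV =>
    refine ReflTransGen.tail (rtg_app (rtg_lam ihM) ihV) ?_
    exact BetaStep.beta (Par.value hV hVp)

/-- Diamond-type lemma for `PlusStep`: two surface `⊕`-redexes are either
identical or can be contracted in either order. -/
theorem plus_diamond : ∀ {M A B A' B' : Term}, PlusStep M A B → PlusStep M A' B' →
    (A = A' ∧ B = B') ∨
    ∃ C₁ C₂ C₃ C₄, PlusStep A C₁ C₂ ∧ PlusStep B C₃ C₄ ∧
      PlusStep A' C₁ C₃ ∧ PlusStep B' C₂ C₄ := by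
  intro M A B A' B' h1
  induction h1 generalizing A' B' with
  | choice =>
    intro h2
    cases h2 with
    | choice => exact Or.inl ⟨rfl, rfl⟩
  | @appL M₁ A₁ B₁ N₁ h ih =>
    intro h2
    cases h2 with
    | appL h2' =>
      rcases ih h2' with ⟨rfl, rfl⟩ | ⟨C₁, C₂, C₃, C₄, hc1, hc2, hc3, hc4⟩
      · exact Or.inl ⟨rfl, rfl⟩
      · exact Or.inr ⟨app C₁ N₁, app C₂ N₁, app C₃ N₁, app C₄ N₁,
          PlusStep.appL hc1, PlusStep.appL hc2, PlusStep.appL hc3, PlusStep.appL hc4⟩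
    | @appR _ _ A₂ B₂ h2' =>
      exact Or.inr ⟨app A₁ A₂, app A₁ B₂, app B₁ A₂, app B₁ B₂,
        PlusStep.appR h2', PlusStep.appR h2', PlusStep.appL h, PlusStep.appL h⟩
  | @appR M₁ N₁ A₁ B₁ h ih =>
    intro h2
    cases h2 with
    | @appL _ A₂ B₂ _ h2' =>
      exact Or.inr ⟨app A₂ A₁, app B₂ A₁, app A₂ B₁, app B₂ B₁,
        PlusStep.appL h2', PlusStep.appL h2', PlusStep.appR h, PlusStep.appR h⟩
    | appR h2' =>
      rcases ih h2' with ⟨rfl, rfl⟩ | ⟨C₁, C₂, C₃, C₄, hc1, hc2, hc3, hc4⟩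
      · exact Or.inl ⟨rfl, rfl⟩
      · exact Or.inr ⟨app M₁ C₁, app M₁ C₂, app M₁ C₃, app M₁ C₄,
          PlusStep.appR hc1, PlusStep.appR hc2, PlusStep.appR hc3, PlusStep.appR hc4⟩

/-- A parallel β-step and a surface `⊕`-step commute. -/
theorem par_plus : ∀ {M A B N : Term}, PlusStep M A B → Par M N →
    ∃ A' B', PlusStep N A' B' ∧ Par A A' ∧ Par B B' := by
  intro M A B N h1
  induction h1 generalizing N with
  | @choice P Q =>
    intro h2
    cases h2 with
    | choice hP hQ => exact ⟨_, _, PlusStep.choice, hP, hQ⟩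
  | @appL M₁ A₁ B₁ N₁ h ih =>
    intro h2
    cases h2 with
    | app hM hN =>
      obtain ⟨A', B', hs, hA, hB⟩ := ih hM
      exact ⟨_, _, PlusStep.appL hs, Par.app hA hN, Par.app hB hN⟩
    | beta hV hM hV2 => cases h
  | @appR M₁ N₁ A₁ B₁ h ih =>
    intro h2
    cases h2 with
    | app hM hN =>
      obtain ⟨A', B', hs, hA, hB⟩ := ih hN
      exact ⟨_, _, PlusStep.appR hs, Par.app hM hA, Par.app hM hB⟩
    | beta hV hM hV2 => cases hV <;> cases h

end Term


namespace MDist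

theorem scale_add {X : Type} (p : ℝ≥0) (m n : MDist X) :
    scale p (m + n) = scale p m + scale p n := Multiset.map_add _ _ _

theorem scale_scale {X : Type} (p q : ℝ≥0) (m : MDist X) :
    scale p (scale q m) = scale (p * q) m := by
  simp [scale, Multiset.map_map, Function.comp, mul_assoc]

theorem scale_one {X : Type} (m : MDist X) : scale 1 m = m := by
  simp [scale]

theorem scale_cons {X : Type} (p q : ℝ≥0) (M : X) (s : MDist X) :
    scale p ((q, M) ::ₘ s) = (p * q, M) ::ₘ scale p s := by
  simp [scale]

theorem scale_single {X : Type} (p : ℝ≥0) (M : X) :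
    scale p (single M) = {(p, M)} := by
  simp [scale, single]

theorem scale_single_add {X : Type} (p : ℝ≥0) (M : X) (t : MDist X) :
    scale p (single M) + t = (p, M) ::ₘ t := by
  simp [scale, single, Multiset.singleton_add]

end MDist

section LiftLemmas

variable {X : Type} {r r₁ r₂ : X → MDist X → Prop}

theorem Lift.cons_id {p : ℝ≥0} {M : X} {s t : MDist X} (h : Lift r s t) :
    Lift r ((p, M) ::ₘ s) ((p, M) ::ₘ t) := by
  have h0 : LiftTerm r M (MDist.single M) := Or.inl rfl
  have := Lift.cons (p := p) h0 h
  rwa [MDist.scale_single_add] at this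

theorem Lift.eq_zero {m n : MDist X} (h : Lift r m n) (hm : m = 0) : n = 0 := by
  induction h with
  | nil => rfl
  | cons _ _ _ => exact absurd hm (by simp)

theorem Lift.refl (m : MDist X) : Lift r m m := by
  induction m using Multiset.induction with
  | empty => exact Lift.nil
  | cons a s ih => obtain ⟨p, M⟩ := a; exact Lift.cons_id ih

theorem Lift.add {a b c d : MDist X} (h1 : Lift r a b) (h2 : Lift r c d) :
    Lift r (a + c) (b + d) := by
  induction h1 with
  | nil => simpa using h2
  | @cons p M m s t hM hs ih =>
    rw [Multiset.cons_add, add_assoc]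
    exact Lift.cons hM ih

theorem Lift.scale (p : ℝ≥0) {a b : MDist X} (h : Lift r a b) :
    Lift r (MDist.scale p a) (MDist.scale p b) := by
  induction h with
  | nil => simpa [MDist.scale] using Lift.nil
  | @cons q M m s t hM hs ih =>
    rw [MDist.scale_cons, MDist.scale_add, MDist.scale_scale]
    exact Lift.cons hM ih

theorem Lift.single_step {M : X} {m : MDist X} (h : r M m) : Lift r (MDist.single M) m := by
  have := Lift.cons (Or.inr h) (Lift.nil (r := r)) (p := 1)
  simpa [MDist.single, MDist.scale_one] using this

theorem Lift.mono (hr : ∀ M m, r₁ M m → r₂ M m) {m n : MDist X} (h : Lift r₁ m n) :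
    Lift r₂ m n := by
  induction h with
  | nil => exact Lift.nil
  | cons hM hs ih =>
    refine Lift.cons ?_ ih
    rcases hM with h' | h'
    · exact Or.inl h'
    · exact Or.inr (hr _ _ h')

theorem Lift.inv {m n : MDist X} (h : Lift r m n) :
    ∀ p (M : X) s, m = (p, M) ::ₘ s →
      ∃ m₁ t, LiftTerm r M m₁ ∧ Lift r s t ∧ n = MDist.scale p m₁ + t := by
  induction h with
  | nil => intro p M s h; exact absurd h (by simp)
  | @cons q N m' s' t' hN hs ih =>
    intro p M s hcons
    rcases Multiset.cons_eq_cons.mp hcons with ⟨h1, h2⟩ | ⟨hne, u, hu1, hu2⟩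
    · obtain ⟨h1a, h1b⟩ := Prod.mk.injEq .. ▸ h1
      subst h1a; subst h1b; subst h2
      exact ⟨m', t', hN, hs, rfl⟩
    · obtain ⟨m₁, t, hM₁, ht, rfl⟩ := ih p M u hu1
      subst hu2
      exact ⟨m₁, MDist.scale q m' + t, hM₁, Lift.cons hN ht, by
        rw [← add_assoc, ← add_assoc, add_comm (MDist.scale q m') (MDist.scale p m₁)]⟩


/-- Lifted commutation: a term-level joinability square between `r₁` and `r₂`
induces one for the lifted relations. -/
theorem lift_comm
    (H : ∀ (M : X) m₁ m₂, LiftTerm r₁ M m₁ → LiftTerm r₂ M m₂ →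
      ∃ n, Lift r₂ m₁ n ∧ Lift r₁ m₂ n) :
    ∀ {m n₁ n₂ : MDist X}, Lift r₁ m n₁ → Lift r₂ m n₂ →
      ∃ n, Lift r₂ n₁ n ∧ Lift r₁ n₂ n := by
  intro m n₁ n₂ h1
  induction h1 generalizing n₂ with
  | nil =>
    intro h2
    have h0 : n₂ = 0 := h2.eq_zero rfl
    subst h0
    exact ⟨0, Lift.nil, Lift.nil⟩
  | @cons p M m₁ s t₁ hM hs ih =>
    intro h2
    obtain ⟨m₂, t₂, hM₂, ht₂, rfl⟩ := h2.inv p M s rfl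
    obtain ⟨n', hn1, hn2⟩ := H M m₁ m₂ hM hM₂
    obtain ⟨t', ht1, ht2⟩ := ih ht₂
    exact ⟨MDist.scale p n' + t',
      Lift.add (hn1.scale p) ht1, Lift.add (hn2.scale p) ht2⟩

end LiftLemmas

section Assembly

open Relation

/-- Parallel β-reduction as a term-to-multidistribution relation. -/
def parRed (M : Term) (m : MDist Term) : Prop := ∃ N, Par M N ∧ m = MDist.single N

theorem liftTerm_parRed {M : Term} {m : MDist Term} (h : LiftTerm parRed M m) :
    parRed M m := by
  rcases h with rfl | h
  · exact ⟨M, Par.refl M, rfl⟩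
  · exact h

theorem H_par : ∀ (M : Term) m₁ m₂, LiftTerm parRed M m₁ → LiftTerm parRed M m₂ →
    ∃ n, Lift parRed m₁ n ∧ Lift parRed m₂ n := by
  intro M m₁ m₂ h1 h2
  obtain ⟨N₁, hN₁, rfl⟩ := liftTerm_parRed h1
  obtain ⟨N₂, hN₂, rfl⟩ := liftTerm_parRed h2
  obtain ⟨N₃, h31, h32⟩ := par_diamond hN₁ hN₂
  exact ⟨MDist.single N₃, Lift.single_step ⟨N₃, h31, rfl⟩, Lift.single_step ⟨N₃, h32, rfl⟩⟩

theorem H_plus : ∀ (M : Term) m₁ m₂, LiftTerm plusRed M m₁ → LiftTerm plusRed M m₂ →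
    ∃ n, Lift plusRed m₁ n ∧ Lift plusRed m₂ n := by
  intro M m₁ m₂ h1 h2
  rcases h1 with rfl | ⟨A, B, hAB, rfl⟩
  · rcases h2 with rfl | h2
    · exact ⟨_, Lift.refl _, Lift.refl _⟩
    · exact ⟨m₂, Lift.single_step h2, Lift.refl _⟩
  · rcases h2 with rfl | ⟨A', B', hAB', rfl⟩
    · exact ⟨_, Lift.refl _, Lift.single_step ⟨A, B, hAB, rfl⟩⟩
    · rcases plus_diamond hAB hAB' with ⟨rfl, rfl⟩ | ⟨C₁, C₂, C₃, C₄, hc1, hc2, hc3, hc4⟩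
      · exact ⟨_, Lift.refl _, Lift.refl _⟩
      · refine ⟨MDist.scale ((1:ℝ≥0)/2) {((1:ℝ≥0)/2, C₁), ((1:ℝ≥0)/2, C₂)} +
            (MDist.scale ((1:ℝ≥0)/2) {((1:ℝ≥0)/2, C₃), ((1:ℝ≥0)/2, C₄)} + 0), ?_, ?_⟩
        · exact Lift.cons (Or.inr ⟨C₁, C₂, hc1, rfl⟩)
            (Lift.cons (Or.inr ⟨C₃, C₄, hc2, rfl⟩) Lift.nil)
        · have e : MDist.scale ((1:ℝ≥0)/2) {((1:ℝ≥0)/2, C₁), ((1:ℝ≥0)/2, C₂)} +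
              (MDist.scale ((1:ℝ≥0)/2) {((1:ℝ≥0)/2, C₃), ((1:ℝ≥0)/2, C₄)} + 0) =
              MDist.scale ((1:ℝ≥0)/2) {((1:ℝ≥0)/2, C₁), ((1:ℝ≥0)/2, C₃)} +
              (MDist.scale ((1:ℝ≥0)/2) {((1:ℝ≥0)/2, C₂), ((1:ℝ≥0)/2, C₄)} + 0) := by
            simp only [MDist.scale, Multiset.insert_eq_cons, Multiset.map_cons,
              Multiset.map_singleton, add_zero, Multiset.cons_add, Multiset.singleton_add]
            exact congrArg _ (Multiset.cons_swap _ _ _)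
          rw [e]
          exact Lift.cons (Or.inr ⟨C₁, C₃, hc3, rfl⟩)
            (Lift.cons (Or.inr ⟨C₂, C₄, hc4, rfl⟩) Lift.nil)

theorem H_comm : ∀ (M : Term) m₁ m₂, LiftTerm parRed M m₁ → LiftTerm plusRed M m₂ →
    ∃ n, Lift plusRed m₁ n ∧ Lift parRed m₂ n := by
  intro M m₁ m₂ h1 h2
  obtain ⟨N, hMN, rfl⟩ := liftTerm_parRed h1
  rcases h2 with rfl | ⟨A, B, hAB, rfl⟩
  · exact ⟨MDist.single N, Lift.refl _, Lift.single_step ⟨N, hMN, rfl⟩⟩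
  · obtain ⟨A', B', hs, hA, hB⟩ := par_plus hAB hMN
    refine ⟨{((1:ℝ≥0)/2, A'), ((1:ℝ≥0)/2, B')}, Lift.single_step ⟨A', B', hs, rfl⟩, ?_⟩
    have h1 : LiftTerm parRed A (MDist.single A') := Or.inr ⟨A', hA, rfl⟩
    have h2 : LiftTerm parRed B (MDist.single B') := Or.inr ⟨B', hB, rfl⟩
    have := Lift.cons (p := (1:ℝ≥0)/2) h1 (Lift.cons (p := (1:ℝ≥0)/2) h2 Lift.nil)
    simpa [MDist.scale_single_add, MDist.scale_single] using this

/-- The union of the two lifted relations. -/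
def URel (m n : MDist Term) : Prop := Lift parRed m n ∨ Lift plusRed m n

theorem U_diamond : ∀ m n₁ n₂, URel m n₁ → URel m n₂ → ∃ n, URel n₁ n ∧ URel n₂ n := by
  intro m n₁ n₂ h1 h2
  rcases h1 with h1 | h1 <;> rcases h2 with h2 | h2
  · obtain ⟨n, ha, hb⟩ := lift_comm H_par h1 h2; exact ⟨n, Or.inl ha, Or.inl hb⟩
  · obtain ⟨n, ha, hb⟩ := lift_comm H_comm h1 h2; exact ⟨n, Or.inr ha, Or.inl hb⟩
  · obtain ⟨n, ha, hb⟩ := lift_comm H_comm h2 h1; exact ⟨n, Or.inl hb, Or.inr ha⟩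
  · obtain ⟨n, ha, hb⟩ := lift_comm H_plus h1 h2; exact ⟨n, Or.inr ha, Or.inr hb⟩

theorem strip {α : Type*} {R : α → α → Prop}
    (hd : ∀ a b c, R a b → R a c → ∃ d, R b d ∧ R c d) :
    ∀ a b c, ReflTransGen R a b → R a c → ∃ d, R b d ∧ ReflTransGen R c d := by
  intro a b c hab
  induction hab with
  | refl => intro hac; exact ⟨c, hac, ReflTransGen.refl⟩
  | @tail b' b hab' hb ih =>
    intro hac
    obtain ⟨d, hd1, hd2⟩ := ih hac
    obtain ⟨e, he1, he2⟩ := hd b' b d hb hd1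
    exact ⟨e, he1, hd2.tail he2⟩

theorem diamond_confluent {α : Type*} {R : α → α → Prop}
    (hd : ∀ a b c, R a b → R a c → ∃ d, R b d ∧ R c d) :
    ∀ a b c, ReflTransGen R a b → ReflTransGen R a c →
      ∃ d, ReflTransGen R b d ∧ ReflTransGen R c d := by
  intro a b c hab
  induction hab generalizing c with
  | refl => exact fun hac => ⟨c, hac, ReflTransGen.refl⟩
  | @tail b' b hab' hb ih =>
    intro hac
    obtain ⟨d, hd1, hd2⟩ := ih c hac
    obtain ⟨e, he1, he2⟩ := strip hd b' d b hd1 hb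
    exact ⟨e, he2, hd2.tail he1⟩

theorem red_split {m n : MDist Term} (h : Lift red m n) :
    ∃ s, Lift parRed m s ∧ Lift plusRed s n := by
  induction h with
  | nil => exact ⟨0, Lift.nil, Lift.nil⟩
  | @cons p M m₁ s t hM hs ih =>
    obtain ⟨s', h1, h2⟩ := ih
    rcases hM with rfl | hr
    · exact ⟨(p, M) ::ₘ s', Lift.cons_id h1, by
        rw [MDist.scale_single_add]; exact Lift.cons_id h2⟩
    · have hr' : betaRed M m₁ ∨ plusRed M m₁ := hr
      rcases hr' with ⟨N, hN, rfl⟩ | hp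
      · refine ⟨(p, N) ::ₘ s', ?_, ?_⟩
        · have hpr : LiftTerm parRed M (MDist.single N) :=
            Or.inr ⟨N, BetaStep_par hN, rfl⟩
          have := Lift.cons (p := p) hpr h1
          rwa [MDist.scale_single_add] at this
        · rw [MDist.scale_single_add]; exact Lift.cons_id h2
      · exact ⟨(p, M) ::ₘ s', Lift.cons_id h1, Lift.cons (Or.inr hp) h2⟩

theorem U_to_red {m n : MDist Term} (h : URel m n) :
    ReflTransGen (Lift red) m n := by
  rcases h with h | h
  · induction h with
    | nil => exact ReflTransGen.refl
    | @cons p M m₁ s t hM hs ih =>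
      obtain ⟨N, hN, rfl⟩ := liftTerm_parRed hM
      rw [MDist.scale_single_add]
      have step : ∀ a b : Term, BetaStep a b →
          Lift red ((p, a) ::ₘ s) ((p, b) ::ₘ s) := by
        intro a b hab
        have hlt : LiftTerm red a (MDist.single b) := Or.inr (Or.inl ⟨b, hab, rfl⟩)
        have := Lift.cons (p := p) hlt (Lift.refl s)
        rwa [MDist.scale_single_add] at this
      refine ReflTransGen.trans
        (ReflTransGen.lift (fun x => (p, x) ::ₘ s) step _ _ (par_rtg hN)) ?_
      exact ReflTransGen.lift (fun x => (p, N) ::ₘ x)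
        (fun _ _ hab => Lift.cons_id hab) _ _ ih
  · exact ReflTransGen.single (h.mono fun M m hp => Or.inr hp)

/-- The reduction `⇒ = ⇒_{β_v} ∪ ⇒⊕` of `Λ⊕^cbv` is confluent. -/
theorem cbv_confluent :
    ∀ a b c : MDist Term, Relation.ReflTransGen (Lift red) a b →
      Relation.ReflTransGen (Lift red) a c →
      ∃ d, Relation.ReflTransGen (Lift red) b d ∧
        Relation.ReflTransGen (Lift red) c d := by
  have toU : ∀ {a b : MDist Term}, ReflTransGen (Lift red) a b → ReflTransGen URel a b := by
    intro a b h
    induction h with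
    | refl => exact ReflTransGen.refl
    | tail _ hstep ih =>
      obtain ⟨s, h1, h2⟩ := red_split hstep
      exact (ih.tail (Or.inl h1)).tail (Or.inr h2)
  have fromU : ∀ {a b : MDist Term}, ReflTransGen URel a b → ReflTransGen (Lift red) a b := by
    intro a b h
    induction h with
    | refl => exact ReflTransGen.refl
    | tail _ hstep ih => exact ih.trans (U_to_red hstep)
  intro a b c hab hac
  obtain ⟨d, hd1, hd2⟩ := diamond_confluent U_diamond a b c (toU hab) (toU hac)
  exact ⟨d, fromU hd1, fromU hd2⟩

end Assembly
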